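/- Let ε > 0, δ ∈ (0, 1), and n ∈ ℕ with n ≥ 3. Suppose b > 0 satisfies ε − log ΔC(b) − log(1 − δ) > 0 and b ≥ (n − 1) / (ε − log ΔC(b) − log(1 − δ)), where ΔC(b) = (2 − e^{−(n−1)/b} − e^{−1/b}) / (1 − e^{−n/b}). Then for all λ, λ' ∈ [0, n] with |λ − λ'| ≤ n − 1 and for every Borel set S ⊆ ℝ, μ_{λ,b}(S) ≤ e^ε · μ_{λ',b}(S) + δ. -/

import Mathlib

open MeasureTheory

/-- The normalizing constant of the bounded Laplace mechanism on `[0, n]`. -/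
noncomputable def Cnorm (n : ℕ) (lam b : ℝ) : ℝ :=
  ∫ x in (0 : ℝ)..(n : ℝ), (1 / (2 * b)) * Real.exp (-|x - lam| / b)

/-- The bounded Laplace distribution on `[0, n]` with location `lam` and scale `b`:
the probability measure on `ℝ` with density
`x ↦ (1/(2b·C(lam,b))) e^{−|x−lam|/b}` on `[0, n]` and `0` elsewhere. -/
noncomputable def boundedLaplace (n : ℕ) (lam b : ℝ) : Measure ℝ :=
  volume.withDensity fun x =>
    if x ∈ Set.Icc (0 : ℝ) (n : ℝ) then
      ENNReal.ofReal ((1 / (2 * b * Cnorm n lam b)) * Real.exp (-|x - lam| / b))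
    else 0

open Real

lemma gmono_alg (X Y NN : ℝ) (h1 : 1 ≤ X) (h2 : X ≤ Y) (h3 : Y ≤ NN) :
    (1 - (X⁻¹ + X/NN)/2) * X ≤ (1 - (Y⁻¹ + Y/NN)/2) * Y := by
  have hX : 0 < X := lt_of_lt_of_le one_pos h1
  have hY : 0 < Y := hX.trans_le h2
  have hN : 0 < NN := hY.trans_le h3
  have e1 : (1 - (X⁻¹ + X/NN)/2) * X = X - (1 + X^2/NN)/2 := by field_simp
  have e2 : (1 - (Y⁻¹ + Y/NN)/2) * Y = Y - (1 + Y^2/NN)/2 := by field_simp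
  rw [e1, e2]
  rw [← sub_nonneg]
  have expand : Y - (1 + Y^2/NN)/2 - (X - (1 + X^2/NN)/2)
      = (Y - X) * (2*NN - X - Y) / (2*NN) := by field_simp; ring
  rw [expand]
  apply div_nonneg _ (by positivity)
  apply mul_nonneg (by linarith) (by linarith)

lemma cmin_alg (u v Q : ℝ) (hu1 : u ≤ 1) (hv1 : v ≤ 1)
    (hQ : u * v = Q) : (1 - Q)/2 ≤ 1 - (u + v)/2 := by
  nlinarith [mul_nonneg (sub_nonneg.2 hu1) (sub_nonneg.2 hv1)]

lemma P_alg (a q r : ℝ) (hq : 0 < q) (hqr : q ≤ r) (hra : r ≤ a) (ha1 : a ≤ 1) :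
    (1 - (a*q + r/a)/2) * ((1-q*r)/2) ≤ (1 - (a + q*r/a)/2) * (1 - (q+r)/2) := by
  have ha : 0 < a := lt_of_lt_of_le (lt_of_lt_of_le hq hqr) hra
  have hr1 : r ≤ 1 := le_trans hra ha1
  have hq1 : q ≤ 1 := le_trans hqr hr1
  have hc : 0 ≤ 2 - r - q*r := by nlinarith
  have hH : 0 ≤ (2 - r - q*r)*(a+1) - 2*(1-r) := by
    nlinarith [mul_nonneg hc (sub_nonneg.2 hra)]
  have key : 0 ≤ (1-q) * ((1-a) * ((2 - r - q*r)*(a+1) - 2*(1-r))) := by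
    apply mul_nonneg (by linarith)
    exact mul_nonneg (by linarith) hH
  rw [← sub_nonneg]
  have expand : (1 - (a + q*r/a)/2) * (1 - (q+r)/2) - (1 - (a*q + r/a)/2) * ((1-q*r)/2)
      = ((1-q) * ((1-a) * ((2 - r - q*r)*(a+1) - 2*(1-r)))) / (4*a) := by
    field_simp
    ring
  rw [expand]
  exact div_nonneg key (by positivity)

noncomputable def lapC (N b t : ℝ) : ℝ := 1 - (Real.exp (-t/b) + Real.exp (-(N-t)/b))/2

lemma lapC_zero (N b : ℝ) : lapC N b 0 = (1 - Real.exp (-N/b))/2 := by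
  simp [lapC]; ring

lemma lapC_sym (N b t : ℝ) : lapC N b (N - t) = lapC N b t := by
  simp [lapC]; ring_nf

lemma lapC_min (N b t : ℝ) (hb : 0 < b) (h0 : 0 ≤ t) (h1 : t ≤ N) :
    lapC N b 0 ≤ lapC N b t := by
  rw [lapC_zero]
  have e1 : Real.exp (-t/b) * Real.exp (-(N-t)/b) = Real.exp (-N/b) := by
    rw [← Real.exp_add]; congr 1; ring
  have hu : Real.exp (-t/b) ≤ 1 := Real.exp_le_one_iff.2
    (div_nonpos_of_nonpos_of_nonneg (by linarith) hb.le)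
  have hv : Real.exp (-(N-t)/b) ≤ 1 := Real.exp_le_one_iff.2
    (div_nonpos_of_nonpos_of_nonneg (by linarith) hb.le)
  exact cmin_alg _ _ _ hu hv e1

lemma lapC_zero_pos (N b : ℝ) (hb : 0 < b) (hN : 0 < N) : 0 < lapC N b 0 := by
  rw [lapC_zero]
  have : Real.exp (-N/b) < 1 := by
    rw [Real.exp_lt_one_iff]
    apply div_neg_of_neg_of_pos <;> linarith
  linarith

lemma lapC_pos (N b t : ℝ) (hb : 0 < b) (hN : 0 < N) (h0 : 0 ≤ t) (h1 : t ≤ N) :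
    0 < lapC N b t := lt_of_lt_of_le (lapC_zero_pos N b hb hN) (lapC_min N b t hb h0 h1)

lemma lapC_gmono (N b s t : ℝ) (hb : 0 < b) (h0 : 0 ≤ s) (hst : s ≤ t) (h1 : t ≤ N) :
    lapC N b s * Real.exp (s/b) ≤ lapC N b t * Real.exp (t/b) := by
  have es : Real.exp (-s/b) = (Real.exp (s/b))⁻¹ := by rw [← Real.exp_neg]; congr 1; ring
  have et : Real.exp (-t/b) = (Real.exp (t/b))⁻¹ := by rw [← Real.exp_neg]; congr 1; ring
  have es2 : Real.exp (-(N-s)/b) = Real.exp (s/b) / Real.exp (N/b) := by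
    rw [← Real.exp_sub]; congr 1; ring
  have et2 : Real.exp (-(N-t)/b) = Real.exp (t/b) / Real.exp (N/b) := by
    rw [← Real.exp_sub]; congr 1; ring
  unfold lapC
  rw [es, es2, et, et2]
  apply gmono_alg
  · rw [Real.one_le_exp_iff]; positivity
  · apply Real.exp_le_exp.2; gcongr
  · apply Real.exp_le_exp.2; gcongr

lemma lapC_P (N b lam : ℝ) (hb : 0 < b) (hN : 2 ≤ N) (h0 : 0 ≤ lam) (h1 : lam ≤ 1) :
    lapC N b (lam + N - 1) * lapC N b 0 ≤ lapC N b lam * lapC N b (N - 1) := by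
  set a := Real.exp (-lam/b) with ha_def
  set q := Real.exp (-(N-1)/b) with hq_def
  set r := Real.exp (-1/b) with hr_def
  have ha : 0 < a := Real.exp_pos _
  have e1 : Real.exp (-(lam + N - 1)/b) = a * q := by
    rw [ha_def, hq_def, ← Real.exp_add]; congr 1; ring
  have e2 : Real.exp (-(N - (lam + N - 1))/b) = r / a := by
    rw [hr_def, ha_def, ← Real.exp_sub]; congr 1; ring
  have e3 : Real.exp (-N/b) = q * r := by
    rw [hq_def, hr_def, ← Real.exp_add]; congr 1; ring
  have e4 : Real.exp (-(N - lam)/b) = q * r / a := by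
    rw [hq_def, hr_def, ha_def, ← Real.exp_add, ← Real.exp_sub]; congr 1; ring
  have e5 : Real.exp (-(N - (N-1))/b) = r := by rw [hr_def]; congr 1; ring
  have hq : 0 < q := Real.exp_pos _
  have hqr : q ≤ r := by
    rw [hq_def, hr_def]; apply Real.exp_le_exp.2; gcongr <;> linarith
  have hra : r ≤ a := by
    rw [hr_def, ha_def]; apply Real.exp_le_exp.2; gcongr <;> linarith
  have ha1 : a ≤ 1 := Real.exp_le_one_iff.2 (div_nonpos_of_nonpos_of_nonneg (by linarith) hb.le)
  rw [lapC_zero]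
  unfold lapC
  rw [e1, e2, e3, e4, e5]
  exact P_alg a q r hq hqr hra ha1

lemma lapC_key (N b lam lam' : ℝ) (hb : 0 < b) (hN : 2 ≤ N) (h0 : 0 ≤ lam)
    (hll : lam ≤ lam') (h1 : lam' ≤ N) (hd : lam' - lam ≤ N - 1) :
    lapC N b lam' * lapC N b 0 * Real.exp ((lam' - lam)/b)
      ≤ lapC N b lam * lapC N b (N - 1) * Real.exp ((N - 1)/b) := by
  have hNpos : (0:ℝ) < N := by linarith
  have hC0 : 0 < lapC N b 0 := lapC_zero_pos N b hb hNpos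
  have hClam : 0 < lapC N b lam := lapC_pos N b lam hb hNpos h0 (by linarith)
  have hClam' : 0 < lapC N b lam' := lapC_pos N b lam' hb hNpos (by linarith) h1
  have hCn1 : 0 < lapC N b (N-1) := lapC_pos N b (N-1) hb hNpos (by linarith) (by linarith)
  have hmin_lam : lapC N b 0 ≤ lapC N b lam := lapC_min N b lam hb h0 (by linarith)
  have hmin_n1 : lapC N b 0 ≤ lapC N b (N-1) := lapC_min N b (N-1) hb (by linarith) (by linarith)
  by_cases hcase : lam' ≤ N - 1
  · -- case (i)
    have g1 : lapC N b lam' * Real.exp (lam'/b) ≤ lapC N b (N-1) * Real.exp ((N-1)/b) :=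
      lapC_gmono N b lam' (N-1) hb (by linarith) hcase (by linarith)
    have step : lapC N b lam' * Real.exp ((lam' - lam)/b)
        ≤ lapC N b (N-1) * Real.exp ((N-1)/b) := by
      have he : Real.exp ((lam' - lam)/b) ≤ Real.exp (lam'/b) := by
        apply Real.exp_le_exp.2; gcongr; linarith
      nlinarith [Real.exp_pos ((lam' - lam)/b)]
    calc lapC N b lam' * lapC N b 0 * Real.exp ((lam' - lam)/b)
        = (lapC N b lam' * Real.exp ((lam' - lam)/b)) * lapC N b 0 := by ring
      _ ≤ (lapC N b (N-1) * Real.exp ((N-1)/b)) * lapC N b lam := by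
          apply mul_le_mul step hmin_lam hC0.le
          positivity
      _ = lapC N b lam * lapC N b (N - 1) * Real.exp ((N - 1)/b) := by ring
  · push_neg at hcase
    by_cases hlam1 : lam ≤ 1
    · -- case (ii)
      have g2 : lapC N b lam' * Real.exp (lam'/b)
          ≤ lapC N b (lam + N - 1) * Real.exp ((lam + N - 1)/b) :=
        lapC_gmono N b lam' (lam + N - 1) hb (by linarith) (by linarith) (by linarith)
      have step : lapC N b lam' * Real.exp ((lam' - lam)/b)
          ≤ lapC N b (lam + N - 1) * Real.exp ((N - 1)/b) := by
        have := mul_le_mul_of_nonneg_right g2 (Real.exp_pos (-lam/b)).le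
        have ea : Real.exp (lam'/b) * Real.exp (-lam/b) = Real.exp ((lam' - lam)/b) := by
          rw [← Real.exp_add]; congr 1; ring
        have eb : Real.exp ((lam + N - 1)/b) * Real.exp (-lam/b) = Real.exp ((N - 1)/b) := by
          rw [← Real.exp_add]; congr 1; ring
        calc lapC N b lam' * Real.exp ((lam' - lam)/b)
            = lapC N b lam' * Real.exp (lam'/b) * Real.exp (-lam/b) := by rw [mul_assoc, ea]
          _ ≤ lapC N b (lam + N - 1) * Real.exp ((lam + N - 1)/b) * Real.exp (-lam/b) := this
          _ = lapC N b (lam + N - 1) * Real.exp ((N - 1)/b) := by rw [mul_assoc, eb]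
      have hP : lapC N b (lam + N - 1) * lapC N b 0 ≤ lapC N b lam * lapC N b (N - 1) :=
        lapC_P N b lam hb hN h0 hlam1
      calc lapC N b lam' * lapC N b 0 * Real.exp ((lam' - lam)/b)
          = (lapC N b lam' * Real.exp ((lam' - lam)/b)) * lapC N b 0 := by ring
        _ ≤ (lapC N b (lam + N - 1) * Real.exp ((N - 1)/b)) * lapC N b 0 := by
            apply mul_le_mul_of_nonneg_right step hC0.le
        _ = (lapC N b (lam + N - 1) * lapC N b 0) * Real.exp ((N - 1)/b) := by ring
        _ ≤ (lapC N b lam * lapC N b (N - 1)) * Real.exp ((N - 1)/b) := by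
            apply mul_le_mul_of_nonneg_right hP (Real.exp_pos _).le
        _ = lapC N b lam * lapC N b (N - 1) * Real.exp ((N - 1)/b) := by ring
    · -- case (iii)
      push_neg at hlam1
      have hCN : lapC N b N = lapC N b 0 := by
        have := lapC_sym N b 0
        simpa using this
      have g3 : lapC N b lam' * Real.exp (lam'/b) ≤ lapC N b 0 * Real.exp (N/b) := by
        have := lapC_gmono N b lam' N hb (by linarith) h1 le_rfl
        rwa [hCN] at this
      have step : lapC N b lam' * Real.exp ((lam' - lam)/b)
          ≤ lapC N b 0 * Real.exp ((N - 1)/b) := by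
        have h4 := mul_le_mul_of_nonneg_right g3 (Real.exp_pos (-lam/b)).le
        have ea : Real.exp (lam'/b) * Real.exp (-lam/b) = Real.exp ((lam' - lam)/b) := by
          rw [← Real.exp_add]; congr 1; ring
        have eb : Real.exp (N/b) * Real.exp (-lam/b) = Real.exp ((N - lam)/b) := by
          rw [← Real.exp_add]; congr 1; ring
        have ec : Real.exp ((N - lam)/b) ≤ Real.exp ((N - 1)/b) := by
          apply Real.exp_le_exp.2; gcongr <;> linarith
        calc lapC N b lam' * Real.exp ((lam' - lam)/b)
            = lapC N b lam' * Real.exp (lam'/b) * Real.exp (-lam/b) := by rw [mul_assoc, ea]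
          _ ≤ lapC N b 0 * Real.exp (N/b) * Real.exp (-lam/b) := h4
          _ = lapC N b 0 * Real.exp ((N - lam)/b) := by rw [mul_assoc, eb]
          _ ≤ lapC N b 0 * Real.exp ((N - 1)/b) := by
              apply mul_le_mul_of_nonneg_left ec hC0.le
      calc lapC N b lam' * lapC N b 0 * Real.exp ((lam' - lam)/b)
          = (lapC N b lam' * Real.exp ((lam' - lam)/b)) * lapC N b 0 := by ring
        _ ≤ (lapC N b 0 * Real.exp ((N - 1)/b)) * lapC N b 0 := by
            apply mul_le_mul_of_nonneg_right step hC0.le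
        _ = (lapC N b 0 * lapC N b 0) * Real.exp ((N - 1)/b) := by ring
        _ ≤ (lapC N b lam * lapC N b (N - 1)) * Real.exp ((N - 1)/b) := by
            apply mul_le_mul_of_nonneg_right _ (Real.exp_pos _).le
            exact mul_le_mul hmin_lam hmin_n1 hC0.le hClam.le
        _ = lapC N b lam * lapC N b (N - 1) * Real.exp ((N - 1)/b) := by ring

lemma lapC_key_abs (N b lam lam' : ℝ) (hb : 0 < b) (hN : 2 ≤ N)
    (h0 : 0 ≤ lam) (h1 : lam ≤ N) (h0' : 0 ≤ lam') (h1' : lam' ≤ N)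
    (hd : |lam - lam'| ≤ N - 1) :
    lapC N b lam' * lapC N b 0 * Real.exp (|lam - lam'|/b)
      ≤ lapC N b lam * lapC N b (N - 1) * Real.exp ((N - 1)/b) := by
  rcases le_total lam lam' with h | h
  · rw [abs_of_nonpos (by linarith)]
    have : -(lam - lam') = lam' - lam := by ring
    rw [this]
    exact lapC_key N b lam lam' hb hN h0 h h1' (by
      rw [abs_of_nonpos (by linarith), this] at hd; exact hd)
  · have habs : |lam - lam'| = lam - lam' := abs_of_nonneg (by linarith)
    rw [habs] at hd ⊢
    have := lapC_key N b (N - lam) (N - lam') hb hN (by linarith) (by linarith)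
      (by linarith) (by linarith)
    rw [lapC_sym, lapC_sym] at this
    have e : N - lam' - (N - lam) = lam - lam' := by ring
    rwa [e] at this

-- interval integral of exp ((x - d)/b)
lemma int_exp_affine (b d a₁ a₂ : ℝ) (hb : b ≠ 0) :
    ∫ x in a₁..a₂, Real.exp ((x - d)/b)
      = b * Real.exp ((a₂ - d)/b) - b * Real.exp ((a₁ - d)/b) := by
  have hder : ∀ x ∈ Set.uIcc a₁ a₂, HasDerivAt (fun x => b * Real.exp ((x - d)/b))
      (Real.exp ((x - d)/b)) x := by
    intro x _
    have h1 : HasDerivAt (fun x : ℝ => (x - d)/b) (1/b) x := by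
      simpa using ((hasDerivAt_id x).sub_const d).div_const b
    have h2 := (Real.hasDerivAt_exp ((x - d)/b)).comp x h1
    have h3 := h2.const_mul b
    convert h3 using 1
    case e'_9 => field_simp
    all_goals rfl
  rw [intervalIntegral.integral_eq_sub_of_hasDerivAt hder
    ((Real.continuous_exp.comp (by continuity)).intervalIntegrable _ _)]

lemma int_exp_affine' (b d a₁ a₂ : ℝ) (hb : b ≠ 0) :
    ∫ x in a₁..a₂, Real.exp ((d - x)/b)
      = b * Real.exp ((d - a₁)/b) - b * Real.exp ((d - a₂)/b) := by
  have hder : ∀ x ∈ Set.uIcc a₁ a₂, HasDerivAt (fun x => -b * Real.exp ((d - x)/b))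
      (Real.exp ((d - x)/b)) x := by
    intro x _
    have h1 : HasDerivAt (fun x : ℝ => (d - x)/b) (-1/b) x := by
      simpa using ((hasDerivAt_id x).const_sub d).div_const b
    have h2 := (Real.hasDerivAt_exp ((d - x)/b)).comp x h1
    have h3 := h2.const_mul (-b)
    convert h3 using 1
    case e'_9 => field_simp
    all_goals rfl
  rw [intervalIntegral.integral_eq_sub_of_hasDerivAt hder
    ((Real.continuous_exp.comp (by continuity)).intervalIntegrable _ _)]
  ring

open MeasureTheory

lemma Cnorm_eq (n : ℕ) (lam b : ℝ) (hb : 0 < b) (h0 : 0 ≤ lam) (h1 : lam ≤ (n:ℝ)) :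
    Cnorm n lam b = lapC (n:ℝ) b lam := by
  have hsplit : ∀ a c : ℝ, IntervalIntegrable
      (fun x => (1/(2*b)) * Real.exp (-|x - lam|/b)) volume a c := by
    intro a c
    exact (by continuity : Continuous fun x : ℝ =>
      (1/(2*b)) * Real.exp (-|x - lam|/b)).intervalIntegrable a c
  unfold Cnorm
  rw [← intervalIntegral.integral_add_adjacent_intervals (hsplit 0 lam) (hsplit lam n)]
  have e1 : ∫ x in (0:ℝ)..lam, (1/(2*b)) * Real.exp (-|x - lam|/b)
      = (1/(2*b)) * (b * Real.exp ((lam - lam)/b) - b * Real.exp ((0 - lam)/b)) := by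
    rw [← int_exp_affine b lam 0 lam hb.ne', ← intervalIntegral.integral_const_mul]
    apply intervalIntegral.integral_congr
    intro x hx
    rw [Set.uIcc_of_le h0] at hx
    have harg : -|x - lam|/b = (x - lam)/b := by
      rw [abs_of_nonpos (by linarith [hx.2])]; ring
    simp only [harg]
  have e2 : ∫ x in lam..(n:ℝ), (1/(2*b)) * Real.exp (-|x - lam|/b)
      = (1/(2*b)) * (b * Real.exp ((lam - lam)/b) - b * Real.exp ((lam - (n:ℝ))/b)) := by
    rw [← int_exp_affine' b lam lam n hb.ne', ← intervalIntegral.integral_const_mul]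
    apply intervalIntegral.integral_congr
    intro x hx
    rw [Set.uIcc_of_le h1] at hx
    have harg : -|x - lam|/b = (lam - x)/b := by
      rw [abs_of_nonneg (by linarith [hx.1])]; ring
    simp only [harg]
  rw [e1, e2, show (lam - lam)/b = (0:ℝ) by ring, Real.exp_zero,
    show ((0:ℝ) - lam)/b = -lam/b by ring,
    show (lam - (n:ℝ))/b = -((n:ℝ) - lam)/b by ring]
  unfold lapC
  field_simp
  ring


lemma boundedLaplace_apply (n : ℕ) (lam b : ℝ) (S : Set ℝ) (hS : MeasurableSet S) :
    boundedLaplace n lam b S = ∫⁻ x in S, (if x ∈ Set.Icc (0 : ℝ) (n : ℝ) then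
      ENNReal.ofReal ((1 / (2 * b * Cnorm n lam b)) * Real.exp (-|x - lam| / b))
    else 0) ∂volume := by
  rw [boundedLaplace, withDensity_apply _ hS]

lemma boundedLaplace_univ (n : ℕ) (lam b : ℝ) (hb : 0 < b) (hn : 0 < n)
    (h0 : 0 ≤ lam) (h1 : lam ≤ (n:ℝ)) :
    boundedLaplace n lam b Set.univ = 1 := by
  have hC : 0 < Cnorm n lam b := by
    rw [Cnorm_eq n lam b hb h0 h1]
    exact lapC_pos _ b lam hb (by exact_mod_cast hn) h0 h1
  rw [boundedLaplace_apply n lam b Set.univ MeasurableSet.univ, Measure.restrict_univ]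
  have hind : (fun x => if x ∈ Set.Icc (0 : ℝ) (n : ℝ) then
      ENNReal.ofReal ((1 / (2 * b * Cnorm n lam b)) * Real.exp (-|x - lam| / b)) else 0)
      = (Set.Icc (0:ℝ) (n:ℝ)).indicator (fun x =>
      ENNReal.ofReal ((1 / (2 * b * Cnorm n lam b)) * Real.exp (-|x - lam| / b))) := by
    funext x
    rw [Set.indicator_apply]
  rw [hind, lintegral_indicator measurableSet_Icc]
  have hcont : Continuous fun x : ℝ => (1 / (2 * b * Cnorm n lam b)) * Real.exp (-|x - lam| / b) := by
    continuity
  have hint : IntegrableOn (fun x : ℝ => (1 / (2 * b * Cnorm n lam b)) * Real.exp (-|x - lam| / b))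
      (Set.Icc (0:ℝ) (n:ℝ)) volume := hcont.integrableOn_Icc
  have hnn : 0 ≤ᵐ[volume.restrict (Set.Icc (0:ℝ) (n:ℝ))]
      fun x : ℝ => (1 / (2 * b * Cnorm n lam b)) * Real.exp (-|x - lam| / b) := by
    apply Filter.Eventually.of_forall
    intro x
    have : 0 ≤ 1 / (2 * b * Cnorm n lam b) := by positivity
    positivity
  rw [← ofReal_integral_eq_lintegral_ofReal hint hnn]
  have hIcc : ∫ x in Set.Icc (0:ℝ) (n:ℝ), (1 / (2 * b * Cnorm n lam b)) * Real.exp (-|x - lam| / b)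
      = ∫ x in (0:ℝ)..(n:ℝ), (1 / (2 * b * Cnorm n lam b)) * Real.exp (-|x - lam| / b) := by
    rw [intervalIntegral.integral_of_le (by exact_mod_cast hn.le : (0:ℝ) ≤ (n:ℝ)),
      integral_Icc_eq_integral_Ioc]
  rw [hIcc]
  have heq : ∫ x in (0:ℝ)..(n:ℝ), (1 / (2 * b * Cnorm n lam b)) * Real.exp (-|x - lam| / b)
      = (Cnorm n lam b)⁻¹ * ∫ x in (0:ℝ)..(n:ℝ), (1/(2*b)) * Real.exp (-|x - lam| / b) := by
    rw [← intervalIntegral.integral_const_mul]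
    apply intervalIntegral.integral_congr
    intro x _
    simp only
    rw [mul_comm (2*b) (Cnorm n lam b)]
    field_simp
  rw [heq]
  have : (∫ x in (0:ℝ)..(n:ℝ), (1/(2*b)) * Real.exp (-|x - lam| / b)) = Cnorm n lam b := by
    rfl
  rw [this, inv_mul_cancel₀ hC.ne']
  simp

set_option maxHeartbeats 1000000

/-- Node differential privacy of the bounded Laplace mechanism: if
`b ≥ (n−1) / (ε − log ΔC(b) − log(1 − δ))`, where
`ΔC(b) = (2 − e^{−(n−1)/b} − e^{−1/b})/(1 − e^{−n/b})`, then for any `λ, λ' ∈ [0, n]`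
with `|λ − λ'| ≤ n − 1` and any Borel `S ⊆ ℝ`, `μ_{λ,b}(S) ≤ e^ε μ_{λ',b}(S) + δ`. -/
theorem bounded_laplace_node_dp (ε δ : ℝ) (hε : 0 < ε) (hδ : δ ∈ Set.Ioo (0 : ℝ) 1)
    (n : ℕ) (hn : 3 ≤ n) (b : ℝ) (hb : 0 < b)
    (hpos : 0 < ε - Real.log ((2 - Real.exp (-((n : ℝ) - 1) / b)
        - Real.exp (-1 / b)) / (1 - Real.exp (-(n : ℝ) / b)))
      - Real.log (1 - δ))
    (hbge : ((n : ℝ) - 1) / (ε - Real.log ((2 - Real.exp (-((n : ℝ) - 1) / b)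
        - Real.exp (-1 / b)) / (1 - Real.exp (-(n : ℝ) / b)))
      - Real.log (1 - δ)) ≤ b)
    (lam lam' : ℝ) (hlam : lam ∈ Set.Icc (0 : ℝ) (n : ℝ))
    (hlam' : lam' ∈ Set.Icc (0 : ℝ) (n : ℝ)) (hdiff : |lam - lam'| ≤ (n : ℝ) - 1)
    (S : Set ℝ) (hS : MeasurableSet S) :
    boundedLaplace n lam b S
      ≤ ENNReal.ofReal (Real.exp ε) * boundedLaplace n lam' b S + ENNReal.ofReal δ := by
  obtain ⟨hδ0, hδ1⟩ := hδ
  set N := (n : ℝ) with hNdef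
  have hN3 : (3:ℝ) ≤ N := by rw [hNdef]; exact_mod_cast hn
  have hN2 : (2:ℝ) ≤ N := by linarith
  have hNpos : (0:ℝ) < N := by linarith
  set DC := (2 - Real.exp (-(N - 1) / b) - Real.exp (-1 / b)) / (1 - Real.exp (-N / b))
    with hDCdef
  have hC0 : 0 < lapC N b 0 := lapC_zero_pos N b hb hNpos
  have hCn1 : 0 < lapC N b (N-1) := lapC_pos N b (N-1) hb hNpos (by linarith) (by linarith)
  have hClam : 0 < lapC N b lam := lapC_pos N b lam hb hNpos hlam.1 hlam.2
  have hClam' : 0 < lapC N b lam' := lapC_pos N b lam' hb hNpos hlam'.1 hlam'.2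
  have hQlt : Real.exp (-N/b) < 1 := by
    rw [Real.exp_lt_one_iff]
    apply div_neg_of_neg_of_pos <;> linarith
  have hlapCn1 : lapC N b (N-1) = 1 - (Real.exp (-(N-1)/b) + Real.exp (-1/b))/2 := by
    unfold lapC
    rw [show N - (N - 1) = (1:ℝ) by ring]
  have hDCeq : DC = lapC N b (N-1) / lapC N b 0 := by
    rw [hDCdef, hlapCn1, lapC_zero]
    have h1Q : (1:ℝ) - Real.exp (-N/b) ≠ 0 := by linarith
    field_simp
    ring
  have hDCpos : 0 < DC := by
    rw [hDCeq]; positivity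
  clear_value DC
  set K := DC * Real.exp ((N - 1)/b) with hKdef
  have hKpos : 0 < K := by positivity
  clear_value K
  -- b large enough
  set E := ε - Real.log DC - Real.log (1 - δ) with hEdef
  have hE : (N - 1)/b ≤ E := by
    rw [div_le_iff₀ hb]
    have h1 : N - 1 ≤ b * E := by
      have := (div_le_iff₀ hpos).1 hbge
      linarith
    linarith
  have hK : K * (1 - δ) ≤ Real.exp ε := by
    have h1 : K ≤ DC * Real.exp E := by
      rw [hKdef]
      exact mul_le_mul_of_nonneg_left (Real.exp_le_exp.2 hE) hDCpos.le
    have h2 : DC * Real.exp E = Real.exp ε / (1 - δ) := by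
      rw [hEdef, Real.exp_sub, Real.exp_sub, Real.exp_log hDCpos,
        Real.exp_log (by linarith : (0:ℝ) < 1 - δ)]
      rw [div_div, mul_div_assoc', mul_div_mul_left _ _ hDCpos.ne']
    rw [h2] at h1
    rw [← le_div_iff₀ (by linarith : (0:ℝ) < 1 - δ)]
    exact h1
  -- key comparison of normalizing constants
  have hkey : lapC N b lam' * lapC N b 0 * Real.exp (|lam - lam'|/b)
      ≤ lapC N b lam * lapC N b (N - 1) * Real.exp ((N - 1)/b) :=
    lapC_key_abs N b lam lam' hb hN2 hlam.1 hlam.2 hlam'.1 hlam'.2 hdiff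
  have hCn1eq : lapC N b (N-1) = DC * lapC N b 0 := by
    rw [hDCeq]; field_simp
  -- pointwise density bound
  have hCnl : Cnorm n lam b = lapC N b lam := Cnorm_eq n lam b hb hlam.1 hlam.2
  have hCnl' : Cnorm n lam' b = lapC N b lam' := Cnorm_eq n lam' b hb hlam'.1 hlam'.2
  have hdens : ∀ x : ℝ, (if x ∈ Set.Icc (0 : ℝ) N then
        ENNReal.ofReal ((1 / (2 * b * Cnorm n lam b)) * Real.exp (-|x - lam| / b)) else 0)
      ≤ ENNReal.ofReal K * (if x ∈ Set.Icc (0 : ℝ) N then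
        ENNReal.ofReal ((1 / (2 * b * Cnorm n lam' b)) * Real.exp (-|x - lam'| / b)) else 0) := by
    intro x
    by_cases hx : x ∈ Set.Icc (0 : ℝ) N
    · rw [if_pos hx, if_pos hx, ← ENNReal.ofReal_mul hKpos.le]
      apply ENNReal.ofReal_le_ofReal
      rw [hCnl, hCnl']
      have tri : Real.exp (-|x - lam|/b)
          ≤ Real.exp (|lam - lam'|/b) * Real.exp (-|x - lam'|/b) := by
        rw [← Real.exp_add]
        apply Real.exp_le_exp.2
        have habs : |x - lam'| ≤ |x - lam| + |lam - lam'| := by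
          rw [show x - lam' = (x - lam) + (lam - lam') by ring]
          exact abs_add_le _ _
        rw [← add_div]
        gcongr
        linarith
      -- main: lapC N b lam' * Real.exp (-|x-lam|/b) ≤ K * lapC N b lam * Real.exp (-|x-lam'|/b)
      have hmain : lapC N b lam' * Real.exp (-|x - lam|/b)
          ≤ K * lapC N b lam * Real.exp (-|x - lam'|/b) := by
        have step1 : lapC N b lam' * Real.exp (-|x - lam|/b)
            ≤ (lapC N b lam' * Real.exp (|lam - lam'|/b)) * Real.exp (-|x - lam'|/b) := by
          have := mul_le_mul_of_nonneg_left tri hClam'.le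
          calc lapC N b lam' * Real.exp (-|x - lam|/b)
              ≤ lapC N b lam' * (Real.exp (|lam - lam'|/b) * Real.exp (-|x - lam'|/b)) := this
            _ = (lapC N b lam' * Real.exp (|lam - lam'|/b)) * Real.exp (-|x - lam'|/b) := by ring
        have step2 : lapC N b lam' * Real.exp (|lam - lam'|/b) ≤ K * lapC N b lam := by
          have h := hkey
          rw [hCn1eq] at h
          have h' : lapC N b lam' * Real.exp (|lam - lam'|/b) * lapC N b 0
              ≤ K * lapC N b lam * lapC N b 0 := by
            calc lapC N b lam' * Real.exp (|lam - lam'|/b) * lapC N b 0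
                = lapC N b lam' * lapC N b 0 * Real.exp (|lam - lam'|/b) := by ring
              _ ≤ lapC N b lam * (DC * lapC N b 0) * Real.exp ((N - 1)/b) := h
              _ = K * lapC N b lam * lapC N b 0 := by rw [hKdef]; ring
          exact le_of_mul_le_mul_right h' hC0
        calc lapC N b lam' * Real.exp (-|x - lam|/b)
            ≤ (lapC N b lam' * Real.exp (|lam - lam'|/b)) * Real.exp (-|x - lam'|/b) := step1
          _ ≤ (K * lapC N b lam) * Real.exp (-|x - lam'|/b) :=
              mul_le_mul_of_nonneg_right step2 (Real.exp_pos _).le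
      rw [show (1:ℝ) / (2 * b * lapC N b lam) * Real.exp (-|x - lam| / b)
          = Real.exp (-|x - lam| / b) / (2 * b * lapC N b lam) by ring,
        show K * ((1:ℝ) / (2 * b * lapC N b lam') * Real.exp (-|x - lam'| / b))
          = (K * Real.exp (-|x - lam'| / b)) / (2 * b * lapC N b lam') by ring,
        div_le_div_iff₀ (by positivity) (by positivity)]
      nlinarith [mul_le_mul_of_nonneg_left hmain (show (0:ℝ) ≤ 2*b by positivity)]
    · rw [if_neg hx, if_neg hx]
      simp
  -- measure comparison
  have hmeas : boundedLaplace n lam b S ≤ ENNReal.ofReal K * boundedLaplace n lam' b S := by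
    rw [boundedLaplace_apply _ _ _ S hS, boundedLaplace_apply _ _ _ S hS,
      ← lintegral_const_mul' _ _ ENNReal.ofReal_ne_top]
    exact lintegral_mono fun x => hdens x
  have hA1 : boundedLaplace n lam b S ≤ 1 := by
    rw [← boundedLaplace_univ n lam b hb (by omega) hlam.1 hlam.2]
    exact measure_mono (Set.subset_univ S)
  have hB1 : boundedLaplace n lam' b S ≤ 1 := by
    rw [← boundedLaplace_univ n lam' b hb (by omega) hlam'.1 hlam'.2]
    exact measure_mono (Set.subset_univ S)
  set A := boundedLaplace n lam b S with hA
  set B := boundedLaplace n lam' b S with hB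
  clear_value A B
  have hAne : A ≠ ⊤ := (hA1.trans_lt ENNReal.one_lt_top).ne
  have hBne : B ≠ ⊤ := (hB1.trans_lt ENNReal.one_lt_top).ne
  have ha : A.toReal ≤ K * B.toReal := by
    have := ENNReal.toReal_mono (ENNReal.mul_ne_top ENNReal.ofReal_ne_top hBne) hmeas
    rwa [ENNReal.toReal_mul, ENNReal.toReal_ofReal hKpos.le] at this
  have ha1 : A.toReal ≤ 1 := by
    have := ENNReal.toReal_mono (by simp) hA1
    simpa using this
  have hAnn : 0 ≤ A.toReal := ENNReal.toReal_nonneg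
  have hBnn : 0 ≤ B.toReal := ENNReal.toReal_nonneg
  have hfinal : A.toReal ≤ Real.exp ε * B.toReal + δ := by
    nlinarith [mul_le_mul_of_nonneg_right hK hBnn,
      mul_le_mul_of_nonneg_right ha (show (0:ℝ) ≤ 1 - δ by linarith)]
  calc A = ENNReal.ofReal A.toReal := (ENNReal.ofReal_toReal hAne).symm
    _ ≤ ENNReal.ofReal (Real.exp ε * B.toReal + δ) := ENNReal.ofReal_le_ofReal hfinal
    _ ≤ ENNReal.ofReal (Real.exp ε * B.toReal) + ENNReal.ofReal δ := ENNReal.ofReal_add_le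
    _ = ENNReal.ofReal (Real.exp ε) * ENNReal.ofReal B.toReal + ENNReal.ofReal δ := by
        rw [ENNReal.ofReal_mul (Real.exp_pos ε).le]
    _ = ENNReal.ofReal (Real.exp ε) * B + ENNReal.ofReal δ := by
        rw [ENNReal.ofReal_toReal hBne]
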